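/- arXiv:2210.14998 — 5 statements merged into one kernel-verified Lean document; each statement's English description precedes it below -/
import Mathlib

section
/- Let μ : {1,...,K} → ℝ be a vector of mean losses, S_1,...,S_T ⊆ {1,...,K} nonempty availability sets, and k_t ∈ S_t played arms. Then for every ordering σ (permutation of {1,...,K}), Σ_{t=1}^T (μ(k_t) − μ(σ(S_t))) ≤ Σ_{i=1}^K Σ_{j : μ(j) ≤ μ(i)} Σ_{t=1}^T (μ(i) − μ(j))·1{k_t = i and j ∈ S_t}. (This is the deterministic mean-loss form of the statement: for i.i.d. losses, the expected ordering regret is bounded by the sum of expected internal sleeping regrets over the dominating pairs.) -/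
open scoped Classical

/-- The best available arm in `S` according to the ordering `σ`:
the element of `S` with the smallest `σ`-rank, i.e. `σ` applied to the
smallest index `r` such that `σ r ∈ S`. -/
noncomputable def bestArm {K : ℕ} (σ : Equiv.Perm (Fin K)) (S : Finset (Fin K))
    (h : S.Nonempty) : Fin K :=
  σ ((S.image σ.symm).min' (h.image σ.symm))

lemma bestArm_mem {K : ℕ} (σ : Equiv.Perm (Fin K)) (S : Finset (Fin K))
    (h : S.Nonempty) : bestArm σ S h ∈ S := by
  have hmin := (S.image σ.symm).min'_mem (h.image σ.symm)
  rcases Finset.mem_image.mp hmin with ⟨x, hx, hxe⟩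
  unfold bestArm
  rw [← hxe, Equiv.apply_symm_apply]
  exact hx

/-- **Internal regret implies ordering regret (deterministic mean-loss form).**
For mean losses `μ`, nonempty availability sets `S t`, played arms `k t ∈ S t`,
and every ordering `σ`:
`Σ_t (μ(k_t) − μ(σ(S_t))) ≤ Σ_i Σ_{j : μ(j) ≤ μ(i)} Σ_t (μ(i) − μ(j))·1{k_t = i ∧ j ∈ S_t}`. -/
theorem ordering_regret_le_sum_internal
    (K T : ℕ) (μ : Fin K → ℝ)
    (S : Fin T → Finset (Fin K)) (hS : ∀ t, (S t).Nonempty)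
    (k : Fin T → Fin K) (hk : ∀ t, k t ∈ S t)
    (σ : Equiv.Perm (Fin K)) :
    ∑ t, (μ (k t) - μ (bestArm σ (S t) (hS t)))
      ≤ ∑ i : Fin K, ∑ j ∈ Finset.univ.filter (fun j => μ j ≤ μ i),
          ∑ t, (μ i - μ j) * (if k t = i ∧ j ∈ S t then 1 else 0) := by
  have key : ∀ t, (μ (k t) - μ (bestArm σ (S t) (hS t)))
      ≤ ∑ i : Fin K, ∑ j ∈ Finset.univ.filter (fun j => μ j ≤ μ i),
          (μ i - μ j) * (if k t = i ∧ j ∈ S t then 1 else 0) := by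
    intro t
    have hnn : ∀ i : Fin K, ∀ j ∈ Finset.univ.filter (fun j => μ j ≤ μ i),
        (0 : ℝ) ≤ (μ i - μ j) * (if k t = i ∧ j ∈ S t then 1 else 0) := by
      intro i j hj
      rcases Finset.mem_filter.mp hj with ⟨_, hle⟩
      split
      · simpa using sub_nonneg.mpr hle
      · simp
    set b := bestArm σ (S t) (hS t) with hb
    by_cases hle : μ b ≤ μ (k t)
    · have h1 : (μ (k t) - μ b) * (if k t = k t ∧ b ∈ S t then 1 else 0)
          = μ (k t) - μ b := by
        rw [if_pos ⟨rfl, bestArm_mem σ (S t) (hS t)⟩]; ring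
      have h2 : μ (k t) - μ b
          ≤ ∑ j ∈ Finset.univ.filter (fun j => μ j ≤ μ (k t)),
            (μ (k t) - μ j) * (if k t = k t ∧ j ∈ S t then 1 else 0) := by
        rw [← h1]
        exact Finset.single_le_sum (hnn (k t))
          (Finset.mem_filter.mpr ⟨Finset.mem_univ _, hle⟩)
      refine h2.trans ?_
      exact Finset.single_le_sum
        (fun i _ => Finset.sum_nonneg (hnn i)) (Finset.mem_univ (k t))
    · have : μ (k t) - μ b ≤ 0 := by linarith [not_le.mp hle]
      exact this.trans (Finset.sum_nonneg fun i _ => Finset.sum_nonneg (hnn i))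
  calc ∑ t, (μ (k t) - μ (bestArm σ (S t) (hS t)))
      ≤ ∑ t, ∑ i : Fin K, ∑ j ∈ Finset.univ.filter (fun j => μ j ≤ μ i),
          (μ i - μ j) * (if k t = i ∧ j ∈ S t then 1 else 0) :=
        Finset.sum_le_sum fun t _ => key t
    _ = _ := by
        rw [Finset.sum_comm]
        exact Finset.sum_congr rfl fun i _ => Finset.sum_comm
end

section
/- For every even T ≥ 2 there is a sleeping MAB instance with K = 3 arms on which an algorithm has zero external sleeping regret against every arm but ordering regret T/2. Concretely, set ℓ_t(k) = k for all t and k ∈ {1,2,3}; S_t = {1,2} and k_t = 1 for t ≤ T/2; S_t = {2,3} and k_t = 3 for t > T/2. Then k_t ∈ S_t for all t, R_ext(k) = 0 for every k ∈ {1,2,3}, while the ordering regret against the identity ordering σ = (1,2,3) satisfies R_ordering(σ) = T/2. -/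
/-- **Zero external sleeping regret but linear ordering regret (adversarial availabilities).**
With K = 3 arms, losses `ℓ_t(k) = k` (arm values 1,2,3), availabilities
`S_t = {1,2}` and plays `k_t = 1` for `t < T/2`, `S_t = {2,3}` and plays `k_t = 3` afterwards:
the plays are always available, the external sleeping regret is 0 against every arm,
while the ordering regret against the identity ordering (which picks the smallest
available arm, i.e. `(S t).min'`) equals `T/2`. -/
theorem zero_external_but_linear_ordering
    (T : ℕ) (hT : 2 ≤ T) (hTeven : Even T)
    (ℓ : ℕ → Fin 3 → ℝ) (hℓ : ∀ t a, ℓ t a = (a : ℕ) + 1)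
    (S : ℕ → Finset (Fin 3)) (hSdef : ∀ t, S t = if t < T / 2 then {0, 1} else {1, 2})
    (k : ℕ → Fin 3) (hkdef : ∀ t, k t = if t < T / 2 then 0 else 2)
    (hS : ∀ t, (S t).Nonempty) :
    (∀ t, k t ∈ S t) ∧
    (∀ a : Fin 3,
      ∑ t ∈ Finset.range T, (ℓ t (k t) - ℓ t a) * (if a ∈ S t then 1 else 0) = 0) ∧
    (∑ t ∈ Finset.range T, (ℓ t (k t) - ℓ t ((S t).min' (hS t))) = (T : ℝ) / 2) := by
  obtain ⟨m, hm⟩ := hTeven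
  have hm2 : T / 2 = m := by omega
  have hmT : m ≤ T := by omega
  refine ⟨?_, ?_, ?_⟩
  · intro t
    rw [hSdef, hkdef]
    by_cases h : t < T / 2 <;> simp [h]
  · intro a
    rw [Finset.range_eq_Ico, ← Finset.sum_Ico_consecutive _ (Nat.zero_le m) hmT]
    have e1 : ∀ t ∈ Finset.Ico 0 m, (ℓ t (k t) - ℓ t a) * (if a ∈ S t then 1 else 0)
        = if a = 1 then (-1 : ℝ) else 0 := by
      intro t ht
      simp only [Finset.mem_Ico] at ht
      have h : t < T / 2 := by omega
      rw [hSdef, hkdef, hℓ, hℓ]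
      simp only [if_pos h]
      fin_cases a <;> simp [Fin.ext_iff] <;> norm_num
    have e2 : ∀ t ∈ Finset.Ico m T, (ℓ t (k t) - ℓ t a) * (if a ∈ S t then 1 else 0)
        = if a = 1 then (1 : ℝ) else 0 := by
      intro t ht
      simp only [Finset.mem_Ico] at ht
      have h : ¬ t < T / 2 := by omega
      rw [hSdef, hkdef, hℓ, hℓ]
      simp only [if_neg h]
      fin_cases a <;> simp [Fin.ext_iff] <;> norm_num
    rw [Finset.sum_congr rfl e1, Finset.sum_congr rfl e2, Finset.sum_const,
      Finset.sum_const]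
    have hTm : T - m = m := by omega
    simp [Nat.card_Ico, hTm]
    by_cases ha : a = 1 <;> simp [ha]
  · rw [Finset.range_eq_Ico, ← Finset.sum_Ico_consecutive _ (Nat.zero_le m) hmT]
    have e1 : ∀ t ∈ Finset.Ico 0 m, (ℓ t (k t) - ℓ t ((S t).min' (hS t))) = 0 := by
      intro t ht
      simp only [Finset.mem_Ico] at ht
      have h : t < T / 2 := by omega
      have hs : S t = ({0, 1} : Finset (Fin 3)) := by rw [hSdef, if_pos h]
      have hmin : (S t).min' (hS t) = 0 := by
        apply le_antisymm
        · exact Finset.min'_le _ _ (by rw [hs]; simp)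
        · exact Fin.zero_le _
      rw [hmin, hkdef, if_pos h, sub_self]
    have e2 : ∀ t ∈ Finset.Ico m T, (ℓ t (k t) - ℓ t ((S t).min' (hS t))) = 1 := by
      intro t ht
      simp only [Finset.mem_Ico] at ht
      have h : ¬ t < T / 2 := by omega
      have hs : S t = ({1, 2} : Finset (Fin 3)) := by rw [hSdef, if_neg h]
      have hmin : (S t).min' (hS t) = 1 := by
        apply le_antisymm
        · exact Finset.min'_le _ _ (by rw [hs]; simp)
        · apply Finset.le_min'
          intro y hy
          rw [hs] at hy
          fin_cases y <;> simp_all <;> decide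
      rw [hmin, hkdef, if_neg h, hℓ, hℓ]
      norm_num
    rw [Finset.sum_congr rfl e1, Finset.sum_congr rfl e2, Finset.sum_const,
      Finset.sum_const]
    have hTm : T - m = m := by omega
    have : (T : ℝ) = 2 * m := by push_cast [hm]; ring
    simp [Nat.card_Ico, hTm, this]
end

section
/- Let K ≥ 2, let S ⊆ {1,...,K} be nonempty, let E = {(i,j) : i ≠ j}, let q̃ : E → [0,1] with Σ_{(i,j)∈E} q̃(i,j) = 1, set Q̃ = Σ_{(i,j)∈E} q̃(i,j)·1{j ∈ S} and assume Q̃ > 0, and define q(i,j) = q̃(i,j)·1{j ∈ S}/Q̃. Let p be a probability vector with p(k) > 0 for k ∈ S and p(k) = 0 for k ∉ S satisfying the fixed-point equation p = Σ_{(i,j)∈E} q(i,j)·p^{i→j}, and let ℓ : {1,...,K} → ℝ. Then the expected aggregated estimated loss equals the expected loss of the played arm: Σ_{a∈S} p(a)·Σ_{(i,j)∈E} q̃(i,j)·ℓ̂_a(i→j) = Σ_{k∈S} p(k)·ℓ(k). -/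
/-- The redistributed vector `p^{i→j}` moves the mass of `p` from `i` to `j`. -/
def redistribute {K : ℕ} (p : Fin K → ℝ) (i j : Fin K) (k : Fin K) : ℝ :=
  if k = i then 0 else if k = j then p i + p j else p k

/-- Importance-weighted loss estimate: `ℓ̂_a(k) = ℓ(k)·1{k = a}/p(k)` for `k ∈ S`,
and `0` for `k ∉ S`, where `a` is the realized played arm. -/
noncomputable def lhat {K : ℕ} (S : Finset (Fin K)) (p ℓ : Fin K → ℝ) (a k : Fin K) : ℝ :=
  if k ∈ S then (if k = a then ℓ k / p k else 0) else 0

/-- Estimated expert loss of the pair `i → j`: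
`ℓ̂_a(i→j) = Σ_k p^{i→j}(k)·ℓ̂_a(k)` if `j ∈ S`, and `ℓ(a)` otherwise. -/
noncomputable def estLoss {K : ℕ} (S : Finset (Fin K)) (p ℓ : Fin K → ℝ) (a i j : Fin K) : ℝ :=
  if j ∈ S then ∑ k : Fin K, redistribute p i j k * lhat S p ℓ a k else ℓ a

/-- **The expected aggregated estimated loss of SI-EXP3 equals the expected loss of the
played arm.** With weights `q̃` on pairs of distinct arms summing to one,
`Q̃ = Σ_{i≠j} q̃(i,j)·1{j ∈ S} > 0`, renormalized weights
`q(i,j) = q̃(i,j)·1{j ∈ S}/Q̃`, and a probability vector `p` supported exactly on `S`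
solving the fixed-point equation `p = Σ_{i≠j} q(i,j)·p^{i→j}`:
`Σ_{a∈S} p(a)·Σ_{i≠j} q̃(i,j)·ℓ̂_a(i→j) = Σ_{k∈S} p(k)·ℓ(k)`. -/
theorem expected_aggregated_estLoss
    (K : ℕ) (hK : 2 ≤ K)
    (S : Finset (Fin K)) (hS : S.Nonempty)
    (qt : Fin K → Fin K → ℝ)
    (hqt : ∀ i j, i ≠ j → 0 ≤ qt i j ∧ qt i j ≤ 1)
    (hqtsum : ∑ i : Fin K, ∑ j : Fin K, (if i ≠ j then qt i j else 0) = 1)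
    (Q : ℝ)
    (hQdef : Q = ∑ i : Fin K, ∑ j : Fin K, (if i ≠ j ∧ j ∈ S then qt i j else 0))
    (hQpos : 0 < Q)
    (q : Fin K → Fin K → ℝ)
    (hqdef : ∀ i j, q i j = qt i j * (if j ∈ S then 1 else 0) / Q)
    (p : Fin K → ℝ)
    (hpos : ∀ k ∈ S, 0 < p k) (hzero : ∀ k ∉ S, p k = 0)
    (hpsum : ∑ k, p k = 1)
    (hfix : ∀ k, p k = ∑ i : Fin K, ∑ j : Fin K,
      if i ≠ j then q i j * redistribute p i j k else 0)
    (ℓ : Fin K → ℝ) :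
    ∑ a ∈ S, p a * (∑ i : Fin K, ∑ j : Fin K,
        if i ≠ j then qt i j * estLoss S p ℓ a i j else 0)
      = ∑ k ∈ S, p k * ℓ k := by
  refine Finset.sum_congr rfl (fun a ha => ?_)
  have hpa : p a ≠ 0 := (hpos a ha).ne'
  -- estLoss simplification on S
  have hest : ∀ i j : Fin K, j ∈ S →
      estLoss S p ℓ a i j = redistribute p i j a * (ℓ a / p a) := by
    intro i j hj
    simp only [estLoss, hj, if_true]
    rw [Finset.sum_eq_single a]
    · simp [lhat, ha]
    · intro k _ hk
      simp [lhat, hk]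
    · simp
  set T := ∑ i : Fin K, ∑ j : Fin K,
      if i ≠ j ∧ j ∈ S then qt i j * redistribute p i j a else 0 with hTdef
  set U := ∑ i : Fin K, ∑ j : Fin K,
      if i ≠ j ∧ j ∉ S then qt i j else 0 with hUdef
  have hT : T = Q * p a := by
    have key : p a = T / Q := by
      rw [hfix a, hTdef, Finset.sum_div]
      refine Finset.sum_congr rfl fun i _ => ?_
      rw [Finset.sum_div]
      refine Finset.sum_congr rfl fun j _ => ?_
      rw [hqdef]
      by_cases hij : i ≠ j <;> by_cases hj : j ∈ S <;>
        simp [hij, hj] <;> ring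
    field_simp at key
    linarith
  have hU : U = 1 - Q := by
    have hsplit : (∑ i : Fin K, ∑ j : Fin K, (if i ≠ j then qt i j else 0))
        = (∑ i : Fin K, ∑ j : Fin K, (if i ≠ j ∧ j ∈ S then qt i j else 0)) + U := by
      rw [hUdef, ← Finset.sum_add_distrib]
      refine Finset.sum_congr rfl fun i _ => ?_
      rw [← Finset.sum_add_distrib]
      refine Finset.sum_congr rfl fun j _ => ?_
      by_cases hij : i ≠ j <;> by_cases hj : j ∈ S <;> simp [hij, hj]
    rw [hqtsum, ← hQdef] at hsplit
    linarith
  have hsum : (∑ i : Fin K, ∑ j : Fin K,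
      if i ≠ j then qt i j * estLoss S p ℓ a i j else 0)
      = (ℓ a / p a) * T + ℓ a * U := by
    rw [hTdef, hUdef, Finset.mul_sum, Finset.mul_sum, ← Finset.sum_add_distrib]
    refine Finset.sum_congr rfl fun i _ => ?_
    rw [Finset.mul_sum, Finset.mul_sum, ← Finset.sum_add_distrib]
    refine Finset.sum_congr rfl fun j _ => ?_
    by_cases hij : i ≠ j
    · by_cases hj : j ∈ S
      · rw [hest i j hj]
        simp [hij, hj]
        ring
      · simp [estLoss, hij, hj, mul_comm]
    · simp [hij]
  rw [hsum, hT, hU]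
  field_simp
  ring
end

section
/- Let K ≥ 2, let S ⊆ {1,...,K} be nonempty, let E = {(i,j) : i ≠ j}, let q̃ : E → [0,1] with Σ_{(i,j)∈E} q̃(i,j) = 1, set Q̃ = Σ_{(i,j)∈E} q̃(i,j)·1{j ∈ S} and assume Q̃ > 0, and define q(i,j) = q̃(i,j)·1{j ∈ S}/Q̃. Let p be a probability vector with p(k) > 0 for k ∈ S and p(k) = 0 for k ∉ S satisfying the fixed-point equation p = Σ_{(i,j)∈E} q(i,j)·p^{i→j}, and let ℓ : {1,...,K} → [0,1]. Then the expected aggregated squared estimated loss is bounded by the number of available arms: Σ_{a∈S} p(a)·Σ_{(i,j)∈E} q̃(i,j)·ℓ̂_a(i→j)² ≤ |S|. -/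
/-- **The expected aggregated squared estimated loss of SI-EXP3 is bounded by the number
of available arms.** With weights `q̃` on pairs of distinct arms summing to one,
`Q̃ = Σ_{i≠j} q̃(i,j)·1{j ∈ S} > 0`, renormalized weights
`q(i,j) = q̃(i,j)·1{j ∈ S}/Q̃`, a probability vector `p` supported exactly on `S`
solving the fixed-point equation `p = Σ_{i≠j} q(i,j)·p^{i→j}`, and losses in `[0,1]`:
`Σ_{a∈S} p(a)·Σ_{i≠j} q̃(i,j)·ℓ̂_a(i→j)² ≤ |S|`. -/
theorem expected_aggregated_squared_estLoss
    (K : ℕ) (hK : 2 ≤ K)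
    (S : Finset (Fin K)) (hS : S.Nonempty)
    (qt : Fin K → Fin K → ℝ)
    (hqt : ∀ i j, i ≠ j → 0 ≤ qt i j ∧ qt i j ≤ 1)
    (hqtsum : ∑ i : Fin K, ∑ j : Fin K, (if i ≠ j then qt i j else 0) = 1)
    (Q : ℝ)
    (hQdef : Q = ∑ i : Fin K, ∑ j : Fin K, (if i ≠ j ∧ j ∈ S then qt i j else 0))
    (hQpos : 0 < Q)
    (q : Fin K → Fin K → ℝ)
    (hqdef : ∀ i j, q i j = qt i j * (if j ∈ S then 1 else 0) / Q)
    (p : Fin K → ℝ)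
    (hpos : ∀ k ∈ S, 0 < p k) (hzero : ∀ k ∉ S, p k = 0)
    (hpsum : ∑ k, p k = 1)
    (hfix : ∀ k, p k = ∑ i : Fin K, ∑ j : Fin K,
      if i ≠ j then q i j * redistribute p i j k else 0)
    (ℓ : Fin K → ℝ) (hℓ : ∀ k, 0 ≤ ℓ k ∧ ℓ k ≤ 1) :
    ∑ a ∈ S, p a * (∑ i : Fin K, ∑ j : Fin K,
        if i ≠ j then qt i j * (estLoss S p ℓ a i j) ^ 2 else 0)
      ≤ (S.card : ℝ) := by

  have hpnn : ∀ k, 0 ≤ p k := by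
    intro k; by_cases h : k ∈ S
    · exact (hpos k h).le
    · exact le_of_eq (hzero k h).symm
  have hple : ∀ i j : Fin K, i ≠ j → p i + p j ≤ 1 := by
    intro i j hij
    calc p i + p j = ∑ k ∈ ({i, j} : Finset (Fin K)), p k := by
          rw [Finset.sum_insert (by simp [hij]), Finset.sum_singleton]
      _ ≤ ∑ k, p k := Finset.sum_le_sum_of_subset_of_nonneg (Finset.subset_univ _)
          (fun k _ _ => hpnn k)
      _ = 1 := hpsum
  have hp1 : ∀ k, p k ≤ 1 := by
    intro k
    calc p k ≤ ∑ k, p k := Finset.single_le_sum (fun k _ => hpnn k) (Finset.mem_univ k)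
      _ = 1 := hpsum
  have hr01 : ∀ i j a : Fin K, i ≠ j → 0 ≤ redistribute p i j a ∧ redistribute p i j a ≤ 1 := by
    intro i j a hij
    unfold redistribute
    split_ifs with h1 h2
    · exact ⟨le_rfl, one_pos.le⟩
    · exact ⟨add_nonneg (hpnn i) (hpnn j), hple i j hij⟩
    · exact ⟨hpnn a, hp1 a⟩
  have hQ1 : Q ≤ 1 := by
    rw [hQdef, ← hqtsum]
    refine Finset.sum_le_sum (fun i _ => Finset.sum_le_sum (fun j _ => ?_))
    by_cases hij : i ≠ j
    · by_cases hj : j ∈ S <;> simp [hij, hj, (hqt i j hij).1]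
    · simp [hij]
  have key : ∀ a ∈ S, p a * (∑ i : Fin K, ∑ j : Fin K,
      if i ≠ j then qt i j * (estLoss S p ℓ a i j) ^ 2 else 0) ≤ 1 := by
    intro a ha
    have hpa := hpos a ha
    have hest : ∀ i j : Fin K, j ∈ S →
        estLoss S p ℓ a i j = redistribute p i j a * (ℓ a / p a) := by
      intro i j hj
      unfold estLoss
      rw [if_pos hj, Finset.sum_eq_single a]
      · unfold lhat; simp [ha]
      · intro k _ hk; unfold lhat; simp [hk]
      · simp
    have hbound : ∀ i j : Fin K,
        (if i ≠ j then qt i j * (estLoss S p ℓ a i j) ^ 2 else 0)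
        ≤ (if i ≠ j ∧ j ∈ S then qt i j * redistribute p i j a else 0) / (p a)^2
          + (if i ≠ j ∧ j ∉ S then qt i j else 0) := by
      intro i j
      by_cases hij : i ≠ j
      · obtain ⟨hq0, hq1⟩ := hqt i j hij
        by_cases hj : j ∈ S
        · rw [if_pos hij, if_pos ⟨hij, hj⟩, if_neg (by tauto), add_zero, hest i j hj]
          obtain ⟨hr0, hr1⟩ := hr01 i j a hij
          obtain ⟨hl0, hl1⟩ := hℓ a
          have h1 : qt i j * (redistribute p i j a * (ℓ a / p a)) ^ 2
              = qt i j * (redistribute p i j a)^2 * (ℓ a)^2 / (p a)^2 := by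
            field_simp
          rw [h1]
          gcongr ?_ / _
          have h2 : (redistribute p i j a)^2 * (ℓ a)^2 ≤ redistribute p i j a := by
            calc (redistribute p i j a)^2 * (ℓ a)^2 ≤ (redistribute p i j a)^2 * 1 := by
                  apply mul_le_mul_of_nonneg_left (by nlinarith) (sq_nonneg _)
              _ = (redistribute p i j a)^2 := mul_one _
              _ ≤ redistribute p i j a := by nlinarith
          calc qt i j * (redistribute p i j a)^2 * (ℓ a)^2
              = qt i j * ((redistribute p i j a)^2 * (ℓ a)^2) := by ring
            _ ≤ qt i j * redistribute p i j a := mul_le_mul_of_nonneg_left h2 hq0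
        · rw [if_pos hij, if_neg (by tauto), if_pos ⟨hij, hj⟩, zero_div, zero_add]
          unfold estLoss
          rw [if_neg hj]
          obtain ⟨hl0, hl1⟩ := hℓ a
          calc qt i j * (ℓ a)^2 ≤ qt i j * 1 :=
                mul_le_mul_of_nonneg_left (by nlinarith) hq0
            _ = qt i j := mul_one _
      · simp only [if_neg hij, if_neg (by tauto : ¬(i ≠ j ∧ j ∈ S)),
          if_neg (by tauto : ¬(i ≠ j ∧ j ∉ S)), zero_div, add_zero, le_refl]
    have hS1 : (∑ i : Fin K, ∑ j : Fin K,
        if i ≠ j ∧ j ∈ S then qt i j * redistribute p i j a else 0) = Q * p a := by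
      have : ∀ i j : Fin K, (if i ≠ j ∧ j ∈ S then qt i j * redistribute p i j a else 0)
          = Q * (if i ≠ j then q i j * redistribute p i j a else 0) := by
        intro i j
        by_cases hij : i ≠ j
        · by_cases hj : j ∈ S
          · rw [if_pos ⟨hij, hj⟩, if_pos hij, hqdef, if_pos hj, mul_one]
            field_simp
          · rw [if_neg (by tauto), if_pos hij, hqdef, if_neg hj]
            simp
        · simp [hij]
      simp only [this, ← Finset.mul_sum]
      rw [← hfix a]
    have hS2 : (∑ i : Fin K, ∑ j : Fin K,
        if i ≠ j ∧ j ∉ S then qt i j else 0) = 1 - Q := by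
      have hpt : ∀ i j : Fin K, (if i ≠ j ∧ j ∉ S then qt i j else 0)
          = (if i ≠ j then qt i j else 0) - (if i ≠ j ∧ j ∈ S then qt i j else 0) := by
        intro i j
        by_cases hij : i ≠ j
        · by_cases hj : j ∈ S <;> simp [hij, hj]
        · simp [hij]
      simp only [hpt, Finset.sum_sub_distrib]
      rw [hqtsum, hQdef]
    have hsum : (∑ i : Fin K, ∑ j : Fin K,
        if i ≠ j then qt i j * (estLoss S p ℓ a i j) ^ 2 else 0)
        ≤ Q * p a / (p a)^2 + (1 - Q) := by
      calc _ ≤ ∑ i : Fin K, ∑ j : Fin K,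
          ((if i ≠ j ∧ j ∈ S then qt i j * redistribute p i j a else 0) / (p a)^2
            + (if i ≠ j ∧ j ∉ S then qt i j else 0)) :=
          Finset.sum_le_sum (fun i _ => Finset.sum_le_sum (fun j _ => hbound i j))
        _ = Q * p a / (p a)^2 + (1 - Q) := by
          simp only [Finset.sum_add_distrib, ← Finset.sum_div]
          rw [hS1, hS2]
    calc p a * (∑ i : Fin K, ∑ j : Fin K,
          if i ≠ j then qt i j * (estLoss S p ℓ a i j) ^ 2 else 0)
        ≤ p a * (Q * p a / (p a)^2 + (1 - Q)) := by
          exact mul_le_mul_of_nonneg_left hsum (hpnn a)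
      _ = Q + p a * (1 - Q) := by field_simp
      _ ≤ Q + 1 * (1 - Q) := by
          have := hp1 a
          nlinarith
      _ = 1 := by ring
  calc ∑ a ∈ S, p a * (∑ i : Fin K, ∑ j : Fin K,
        if i ≠ j then qt i j * (estLoss S p ℓ a i j) ^ 2 else 0)
      ≤ ∑ _a ∈ S, (1 : ℝ) := Finset.sum_le_sum key
    _ = (S.card : ℝ) := by simp
end

section
/- Let P : {1,...,K}² → ℝ satisfy P(a,b) + P(b,a) = 1 for all a, b, and suppose P admits a total ordering, i.e., there is a bijection ρ : {1,...,K} → {1,...,K} such that ρ(a) ≤ ρ(b) implies P(a,j) ≥ P(b,j) for all j. For each round t = 1,...,T, let A_t ⊆ {1,...,K}² be a symmetric nonempty set of available pairs ((i,j) ∈ A_t iff (j,i) ∈ A_t), with A_t(i) = {j : (i,j) ∈ A_t}, and let the learner play (i_t, j_t) ∈ A_t. Then the internal sleeping dueling-bandit regret satisfies the decomposition: Σ_{t=1}^T (max_{j*∈A_t(i_t)} P(j*, i_t) + max_{i*∈A_t(j_t)} P(i*, j_t) − 1) ≤ Σ_{i=1}^K Σ_{i'∈D_i} Σ_{t=1}^T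 (P(j_t, i) − P(j_t, i'))·1{i_t = i and i' ∈ A_t(j_t)} + Σ_{j=1}^K Σ_{j'∈D_j} Σ_{t=1}^T (P(i_t, j) − P(i_t, j'))·1{j_t = j and j' ∈ A_t(i_t)}, where D_i = {i' : P(i', j) ≥ P(i, j) for all j}. -/
open scoped Classical

lemma key_lemma {K : ℕ} (P : Fin K → Fin K → ℝ)
    (hP : ∀ a b, P a b + P b a = 1)
    (ρ : Equiv.Perm (Fin K))
    (hρ : ∀ a b, ρ a ≤ ρ b → ∀ j, P b j ≤ P a j)
    (S : Finset (Fin K)) (hS : S.Nonempty) (i j : Fin K) (hj : j ∈ S) :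
    S.sup' hS (fun x => P x i) - P j i ≤
      ∑ j' ∈ Finset.univ.filter (fun j' => ∀ a, P j a ≤ P j' a),
        (P i j - P i j') * (if j' ∈ S then 1 else 0) := by
  obtain ⟨js, hjsS, hmin⟩ := S.exists_min_image (fun x => ρ x) hS
  have hsup : S.sup' hS (fun x => P x i) ≤ P js i :=
    Finset.sup'_le _ _ fun x hx => hρ _ _ (hmin x hx) i
  have hdom : ∀ a, P j a ≤ P js a := hρ _ _ (hmin j hj)
  have hmem : js ∈ Finset.univ.filter (fun j' => ∀ a, P j a ≤ P j' a) := by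
    simp [hdom]
  have hnonneg : ∀ j' ∈ Finset.univ.filter (fun j' => ∀ a, P j a ≤ P j' a),
      0 ≤ (P i j - P i j') * (if j' ∈ S then 1 else 0) := by
    intro j' hj'
    simp only [Finset.mem_filter] at hj'
    have h1 := hj'.2 i
    have h2 := hP i j
    have h3 := hP i j'
    have : 0 ≤ P i j - P i j' := by linarith
    positivity
  have hsingle := Finset.single_le_sum hnonneg hmem
  have h2 := hP i j
  have h3 := hP i js
  rw [if_pos hjsS] at hsingle
  calc S.sup' hS (fun x => P x i) - P j i ≤ P js i - P j i := by linarith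
    _ = (P i j - P i js) * 1 := by ring_nf; linarith
    _ ≤ _ := hsingle


/-- The set of possible adversaries of arm `i` given the available pairs `A`:
`A(i) = {j : (i,j) ∈ A}`. -/
def advSet {K : ℕ} (A : Finset (Fin K × Fin K)) (i : Fin K) : Finset (Fin K) :=
  Finset.univ.filter (fun j => (i, j) ∈ A)

/-- **Internal sleeping dueling-bandit regret decomposition.** Let `P` be a preference
matrix with `P(a,b) + P(b,a) = 1` admitting a total ordering `ρ`
(`ρ(a) ≤ ρ(b)` implies `P(a,j) ≥ P(b,j)` for all `j`).  At each round `t` a symmetric set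
of available pairs `A_t` is revealed and the learner plays `(i_t, j_t) ∈ A_t`.  Then
`Σ_t (max_{j*∈A_t(i_t)} P(j*, i_t) + max_{i*∈A_t(j_t)} P(i*, j_t) − 1)
  ≤ Σ_i Σ_{i'∈D_i} Σ_t (P(j_t, i) − P(j_t, i'))·1{i_t = i ∧ i' ∈ A_t(j_t)}
  + Σ_j Σ_{j'∈D_j} Σ_t (P(i_t, j) − P(i_t, j'))·1{j_t = j ∧ j' ∈ A_t(i_t)}`,
where `D_i = {i' : P(i', j) ≥ P(i, j) for all j}`. -/
theorem sleeping_dueling_regret_decomposition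
    (K T : ℕ) (P : Fin K → Fin K → ℝ)
    (hP : ∀ a b, P a b + P b a = 1)
    (ρ : Equiv.Perm (Fin K))
    (hρ : ∀ a b, ρ a ≤ ρ b → ∀ j, P b j ≤ P a j)
    (A : Fin T → Finset (Fin K × Fin K))
    (hne : ∀ t, (A t).Nonempty)
    (hsym : ∀ t (i j : Fin K), (i, j) ∈ A t ↔ (j, i) ∈ A t)
    (it jt : Fin T → Fin K)
    (hplay : ∀ t, (it t, jt t) ∈ A t)
    (h1 : ∀ t, (advSet (A t) (it t)).Nonempty)
    (h2 : ∀ t, (advSet (A t) (jt t)).Nonempty) :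
    ∑ t, ((advSet (A t) (it t)).sup' (h1 t) (fun jstar => P jstar (it t))
        + (advSet (A t) (jt t)).sup' (h2 t) (fun istar => P istar (jt t)) - 1)
      ≤ (∑ i : Fin K, ∑ i' ∈ Finset.univ.filter (fun i' => ∀ j, P i j ≤ P i' j),
            ∑ t, (P (jt t) i - P (jt t) i') *
              (if it t = i ∧ i' ∈ advSet (A t) (jt t) then 1 else 0))
        + (∑ j : Fin K, ∑ j' ∈ Finset.univ.filter (fun j' => ∀ i, P j i ≤ P j' i),
            ∑ t, (P (it t) j - P (it t) j') *
              (if jt t = j ∧ j' ∈ advSet (A t) (it t) then 1 else 0)) := by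
  have hmem1 : ∀ t, jt t ∈ advSet (A t) (it t) := by
    intro t; simp [advSet, hplay t]
  have hmem2 : ∀ t, it t ∈ advSet (A t) (jt t) := by
    intro t; simp [advSet, (hsym t (it t) (jt t)).mp (hplay t)]
  have hRHS1 : (∑ i : Fin K, ∑ i' ∈ Finset.univ.filter (fun i' => ∀ j, P i j ≤ P i' j),
            ∑ t, (P (jt t) i - P (jt t) i') *
              (if it t = i ∧ i' ∈ advSet (A t) (jt t) then 1 else 0))
      = ∑ t, ∑ i' ∈ Finset.univ.filter (fun i' => ∀ j, P (it t) j ≤ P i' j),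
          (P (jt t) (it t) - P (jt t) i') * (if i' ∈ advSet (A t) (jt t) then 1 else 0) := by
    rw [Finset.sum_congr rfl fun i _ => Finset.sum_comm, Finset.sum_comm]
    refine Finset.sum_congr rfl fun t _ => ?_
    rw [Finset.sum_eq_single (it t)]
    · refine Finset.sum_congr rfl fun i' _ => ?_
      congr 1
      simp
    · intro b _ hb
      apply Finset.sum_eq_zero
      intro i' _
      rw [if_neg (by tauto), mul_zero]
    · intro h; exact absurd (Finset.mem_univ _) h
  have hRHS2 : (∑ j : Fin K, ∑ j' ∈ Finset.univ.filter (fun j' => ∀ i, P j i ≤ P j' i),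
            ∑ t, (P (it t) j - P (it t) j') *
              (if jt t = j ∧ j' ∈ advSet (A t) (it t) then 1 else 0))
      = ∑ t, ∑ j' ∈ Finset.univ.filter (fun j' => ∀ i, P (jt t) i ≤ P j' i),
          (P (it t) (jt t) - P (it t) j') * (if j' ∈ advSet (A t) (it t) then 1 else 0) := by
    rw [Finset.sum_congr rfl fun j _ => Finset.sum_comm, Finset.sum_comm]
    refine Finset.sum_congr rfl fun t _ => ?_
    rw [Finset.sum_eq_single (jt t)]
    · refine Finset.sum_congr rfl fun j' _ => ?_
      congr 1
      simp
    · intro b _ hb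
      apply Finset.sum_eq_zero
      intro j' _
      rw [if_neg (by tauto), mul_zero]
    · intro h; exact absurd (Finset.mem_univ _) h
  rw [hRHS1, hRHS2, ← Finset.sum_add_distrib]
  refine Finset.sum_le_sum fun t _ => ?_
  have k1 := key_lemma P hP ρ hρ (advSet (A t) (jt t)) (h2 t) (jt t) (it t) (hmem2 t)
  have k2 := key_lemma P hP ρ hρ (advSet (A t) (it t)) (h1 t) (it t) (jt t) (hmem1 t)
  have hp := hP (it t) (jt t)
  linarith
end
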